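/- For a quantum operation Φ that is G-limited with amplification factor k_Φ = lim_{E→∞} Y_Φ(E)/E, the extension of Φ to √G-bounded operators satisfies b_{√G}(Φ(A)) ≤ √(k_Φ ‖Φ(I)‖) · b_{√G}(A), where b_{√G}(A) = lim_{E→∞} ‖A‖_E^G/√E is the √G-bound. Consequently Φ maps √G-infinitesimal operators to √G-infinitesimal operators. -/

import Mathlib

open Filter

/-- for a `G`-limited quantum operation `Φ` with amplification factor
`k_Φ = lim_{E→∞} Y_Φ(E)/E`, the extension of `Φ` satisfies
`b_{√G}(Φ(A)) ≤ √(k_Φ‖Φ(I)‖)·b_{√G}(A)`; consequently `Φ` maps `√G`-infinitesimal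
operators to `√G`-infinitesimal operators.  Following the context, the norm bound
`‖Φ(A)‖_E^G ≤ √‖Φ(I)‖·‖A‖_{Y_Φ(E)}^G` is assumed, the functions `E ↦ ‖A‖_E^G` and
`E ↦ ‖Φ(A)‖_E^G` are abstracted as nondecreasing functions with concave squares, and
the `√G`-bounds are the limits of `‖·‖_E^G/√E`. -/
theorem sqrtG_bound_of_image
    (YΦ : ℝ → ℝ) (hYconc : ConcaveOn ℝ (Set.Ioi 0) YΦ)
    (hYnn : ∀ E ∈ Set.Ioi (0:ℝ), 0 ≤ YΦ E)
    (kΦ : ℝ) (hk : Tendsto (fun E => YΦ E / E) atTop (nhds kΦ))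
    (c : ℝ) (hc : 0 ≤ c)  -- `c = ‖Φ(I)‖`
    (nA nΦA : ℝ → ℝ)  -- `nA E = ‖A‖_E^G`, `nΦA E = ‖Φ(A)‖_E^G`
    (hnAmono : MonotoneOn nA (Set.Ioi 0)) (hnΦAmono : MonotoneOn nΦA (Set.Ioi 0))
    (hnAnn : ∀ E ∈ Set.Ioi (0:ℝ), 0 ≤ nA E) (hnΦAnn : ∀ E ∈ Set.Ioi (0:ℝ), 0 ≤ nΦA E)
    (hnAconc : ConcaveOn ℝ (Set.Ioi 0) (fun E => (nA E) ^ 2))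
    (hnΦAconc : ConcaveOn ℝ (Set.Ioi 0) (fun E => (nΦA E) ^ 2))
    (hbound : ∀ E > 0, nΦA E ≤ Real.sqrt c * nA (YΦ E))
    (bA bΦA : ℝ)  -- the √G-bounds `b_{√G}(A)` and `b_{√G}(Φ(A))`
    (hbA : Tendsto (fun E => nA E / Real.sqrt E) atTop (nhds bA))
    (hbΦA : Tendsto (fun E => nΦA E / Real.sqrt E) atTop (nhds bΦA)) :
    bΦA ≤ Real.sqrt (kΦ * c) * bA ∧ (bA = 0 → bΦA = 0) := by
  have hbA0 : 0 ≤ bA := by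
    refine ge_of_tendsto hbA ?_
    filter_upwards [eventually_gt_atTop (0:ℝ)] with E hE
    exact div_nonneg (hnAnn E hE) (Real.sqrt_nonneg E)
  have hbΦA0 : 0 ≤ bΦA := by
    refine ge_of_tendsto hbΦA ?_
    filter_upwards [eventually_gt_atTop (0:ℝ)] with E hE
    exact div_nonneg (hnΦAnn E hE) (Real.sqrt_nonneg E)
  have hk0 : 0 ≤ kΦ := by
    refine ge_of_tendsto hk ?_
    filter_upwards [eventually_gt_atTop (0:ℝ)] with E hE
    exact div_nonneg (hYnn E hE) hE.le
  have hsqrt_atTop : Tendsto Real.sqrt atTop atTop := by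
    refine tendsto_atTop.mpr fun b => ?_
    filter_upwards [eventually_ge_atTop (b ^ 2)] with E h1
    calc b ≤ |b| := le_abs_self b
      _ = Real.sqrt (b ^ 2) := (Real.sqrt_sq_eq_abs b).symm
      _ ≤ Real.sqrt E := Real.sqrt_le_sqrt h1
  have main : bΦA ≤ Real.sqrt (kΦ * c) * bA := by
    by_cases hzero : ∃ E0 > (0:ℝ), YΦ E0 = 0
    · -- Degenerate case: `YΦ` vanishes somewhere, hence (by concavity) eventually.
      obtain ⟨E0, hE0, hY0⟩ := hzero
      have hvan : ∀ E > E0, YΦ E = 0 := by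
        intro E hE
        have hEpos : (0:ℝ) < E := lt_trans hE0 hE
        set l : ℝ := (E - E0) / (E - E0 / 2) with hl
        have hd : 0 < E - E0 / 2 := by linarith
        have hl0 : 0 ≤ l := div_nonneg (by linarith) hd.le
        have hl1 : l < 1 := (div_lt_one hd).mpr (by linarith)
        have hlmul : l * (E - E0 / 2) = E - E0 := div_mul_cancel₀ _ hd.ne'
        have hcomb : l * (E0 / 2) + (1 - l) * E = E0 := by linear_combination -hlmul
        have hcc := hYconc.2 (show E0 / 2 ∈ Set.Ioi (0:ℝ) by
            simp only [Set.mem_Ioi]; linarith)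
          (show E ∈ Set.Ioi (0:ℝ) from hEpos) hl0
          (show (0:ℝ) ≤ 1 - l by linarith) (show l + (1 - l) = 1 by ring)
        simp only [smul_eq_mul] at hcc
        rw [hcomb, hY0] at hcc
        have h1 : 0 ≤ YΦ (E0 / 2) := hYnn _ (by simp only [Set.mem_Ioi]; linarith)
        have h2 : 0 ≤ YΦ E := hYnn _ hEpos
        nlinarith [mul_nonneg hl0 h1]
      have hk0' : kΦ = 0 := by
        have h0 : Tendsto (fun E => YΦ E / E) atTop (nhds 0) := by
          refine Tendsto.congr' ?_ tendsto_const_nhds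
          filter_upwards [eventually_gt_atTop E0] with E hE
          rw [hvan E hE, zero_div]
        exact tendsto_nhds_unique hk h0
      have hΦ0 : bΦA ≤ 0 := by
        refine le_of_tendsto_of_tendsto hbΦA
          (tendsto_const_nhds.div_atTop hsqrt_atTop :
            Tendsto (fun E => (Real.sqrt c * nA 0) / Real.sqrt E) atTop (nhds 0)) ?_
        filter_upwards [eventually_gt_atTop E0, eventually_gt_atTop (0:ℝ)] with E hE hEp
        have h1 : nΦA E ≤ Real.sqrt c * nA (YΦ E) := hbound E hEp
        rw [hvan E hE] at h1
        have hsE : 0 < Real.sqrt E := Real.sqrt_pos.mpr hEp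
        exact div_le_div_of_nonneg_right h1 hsE.le
      rw [hk0', zero_mul, Real.sqrt_zero, zero_mul]
      exact hΦ0
    · -- Main case: `YΦ > 0` on `Ioi 0`.
      push_neg at hzero
      have hYpos : ∀ E > (0:ℝ), 0 < YΦ E := fun E hE =>
        lt_of_le_of_ne (hYnn E hE) (Ne.symm (hzero E hE))
      have hf2 : Tendsto (fun E => nA E ^ 2 / E) atTop (nhds (bA ^ 2)) := by
        refine Tendsto.congr' ?_ (hbA.pow 2)
        filter_upwards [eventually_gt_atTop (0:ℝ)] with E hE
        rw [div_pow, Real.sq_sqrt hE.le]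
      have hΦ2 : Tendsto (fun E => nΦA E ^ 2 / E) atTop (nhds (bΦA ^ 2)) := by
        refine Tendsto.congr' ?_ (hbΦA.pow 2)
        filter_upwards [eventually_gt_atTop (0:ℝ)] with E hE
        rw [div_pow, Real.sq_sqrt hE.le]
      have key : ∀ b > (1:ℝ),
          bΦA ^ 2 ≤ c * ((nA b ^ 2 - nA 1 ^ 2) / (b - 1)) * kΦ := by
        intro b hb
        have hb0 : (0:ℝ) < b := lt_trans one_pos hb
        have hb1 : (0:ℝ) < b - 1 := by linarith
        set s := (nA b ^ 2 - nA 1 ^ 2) / (b - 1) with hs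
        have h1mem : (1:ℝ) ∈ Set.Ioi (0:ℝ) := by norm_num
        have h1b : nA 1 ≤ nA b := hnAmono h1mem hb0 hb.le
        have hAB : nA 1 ^ 2 ≤ nA b ^ 2 := pow_le_pow_left₀ (hnAnn 1 h1mem) h1b 2
        have hs0 : 0 ≤ s := div_nonneg (by linarith) hb1.le
        -- affine upper bound on `nA y ^ 2`
        have hub : ∀ y > (0:ℝ), nA y ^ 2 ≤ nA b ^ 2 + s * y := by
          intro y hy
          rcases le_or_gt y b with hyb | hyb
          · have h1 : nA y ≤ nA b := hnAmono hy hb0 hyb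
            have h2 : nA y ^ 2 ≤ nA b ^ 2 := pow_le_pow_left₀ (hnAnn y hy) h1 2
            nlinarith [mul_nonneg hs0 hy.le]
          · have hy1 : (0:ℝ) < y - 1 := by linarith
            have hl0 : 0 ≤ (y - b) / (y - 1) := div_nonneg (by linarith) hy1.le
            have hl1 : 0 ≤ (b - 1) / (y - 1) := div_nonneg hb1.le hy1.le
            have hsum : (y - b) / (y - 1) + (b - 1) / (y - 1) = 1 := by
              field_simp
              ring
            have hcc := hnAconc.2 h1mem (show y ∈ Set.Ioi (0:ℝ) from hy) hl0 hl1 hsum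
            simp only [smul_eq_mul] at hcc
            rw [show (y - b) / (y - 1) * 1 + (b - 1) / (y - 1) * y = b by
              field_simp; ring] at hcc
            rw [div_mul_eq_mul_div, div_mul_eq_mul_div, ← add_div,
              div_le_iff₀ hy1] at hcc
            rw [hs, div_mul_eq_mul_div, ← sub_le_iff_le_add', le_div_iff₀ hb1]
            nlinarith [mul_nonneg hb0.le (sub_nonneg.mpr hAB)]
        -- eventual bound on `nΦA E ^ 2 / E`
        have hg : Tendsto (fun E => c * nA b ^ 2 / E + c * s * (YΦ E / E)) atTop
            (nhds (0 + c * s * kΦ)) :=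
          (tendsto_const_nhds.div_atTop tendsto_id).add (hk.const_mul (c * s))
        have hle : bΦA ^ 2 ≤ 0 + c * s * kΦ := by
          refine le_of_tendsto_of_tendsto hΦ2 hg ?_
          filter_upwards [eventually_gt_atTop (0:ℝ)] with E hE
          have hY := hYpos E hE
          have h1 : nΦA E ≤ Real.sqrt c * nA (YΦ E) := hbound E hE
          have h2 : nΦA E ^ 2 ≤ c * nA (YΦ E) ^ 2 := by
            calc nΦA E ^ 2 ≤ (Real.sqrt c * nA (YΦ E)) ^ 2 :=
                  pow_le_pow_left₀ (hnΦAnn E hE) h1 2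
              _ = c * nA (YΦ E) ^ 2 := by rw [mul_pow, Real.sq_sqrt hc]
          have h3 : nA (YΦ E) ^ 2 ≤ nA b ^ 2 + s * YΦ E := hub _ hY
          have h4 : nΦA E ^ 2 ≤ c * nA b ^ 2 + c * s * YΦ E := by
            nlinarith [mul_le_mul_of_nonneg_left h3 hc]
          calc nΦA E ^ 2 / E ≤ (c * nA b ^ 2 + c * s * YΦ E) / E :=
                div_le_div_of_nonneg_right h4 hE.le
            _ = c * nA b ^ 2 / E + c * s * (YΦ E / E) := by ring
        linarith
      -- let `b → ∞` in the chord slope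
      have hbb1 : Tendsto (fun b : ℝ => b / (b - 1)) atTop (nhds 1) := by
        have h : Tendsto (fun b : ℝ => 1 + 1 / (b - 1)) atTop (nhds (1 + 0)) :=
          tendsto_const_nhds.add
            (tendsto_const_nhds.div_atTop (tendsto_atTop_add_const_right _ (-1) tendsto_id))
        rw [add_zero] at h
        refine Tendsto.congr' ?_ h
        filter_upwards [eventually_gt_atTop (1:ℝ)] with b hb
        have : b - 1 ≠ 0 := by linarith
        field_simp
        ring
      have hslope : Tendsto (fun b : ℝ => (nA b ^ 2 - nA 1 ^ 2) / (b - 1)) atTop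
          (nhds (bA ^ 2)) := by
        have ha : Tendsto (fun b : ℝ => (nA b ^ 2 / b - nA 1 ^ 2 / b) * (b / (b - 1)))
            atTop (nhds ((bA ^ 2 - 0) * 1)) :=
          ((hf2.sub (tendsto_const_nhds.div_atTop tendsto_id)).mul hbb1)
        rw [sub_zero, mul_one] at ha
        refine Tendsto.congr' ?_ ha
        filter_upwards [eventually_gt_atTop (1:ℝ)] with b hb
        have hb0 : b ≠ 0 := by intro h; rw [h] at hb; linarith
        have hb1 : b - 1 ≠ 0 := by intro h; nlinarith
        field_simp
        try ring
      have hmain2 : bΦA ^ 2 ≤ c * bA ^ 2 * kΦ := by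
        refine ge_of_tendsto ((hslope.const_mul c).mul_const kΦ) ?_
        filter_upwards [eventually_gt_atTop (1:ℝ)] with b hb
        exact key b hb
      have hRHS : (Real.sqrt (kΦ * c) * bA) ^ 2 = c * bA ^ 2 * kΦ := by
        rw [mul_pow, Real.sq_sqrt (mul_nonneg hk0 hc)]; ring
      calc bΦA = Real.sqrt (bΦA ^ 2) := (Real.sqrt_sq hbΦA0).symm
        _ ≤ Real.sqrt ((Real.sqrt (kΦ * c) * bA) ^ 2) :=
            Real.sqrt_le_sqrt (by rw [hRHS]; exact hmain2)
        _ = _ := Real.sqrt_sq (mul_nonneg (Real.sqrt_nonneg _) hbA0)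
  refine ⟨main, fun h => ?_⟩
  have h2 := main
  rw [h, mul_zero] at h2
  linarith
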